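/- Let B ⊆ C_ℝ satisfy ℝ^N + B = B (i.e. b + Y ∈ B for every b ∈ ℝ^N and Y ∈ B). Let Q^1,…,Q^N be probability measures on (Ω, 𝓕) absolutely continuous with respect to P such that Σ_{n=1}^N E_{Q^n}[Z^n] ≤ 0 for every Z ∈ B with Σ_{n=1}^N Z^n = 0 P-a.s. and Z^n ∈ L^1(Q^n) for every n. Then for every Y ∈ B with Y^n ∈ L^1(Q^n) for every n one has Σ_{n=1}^N E_{Q^n}[Y^n] ≤ c, where c ∈ ℝ is the constant with Σ_{n=1}^N Y^n = c P-a.s. -/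
import Mathlib


open MeasureTheory

/-- Proposition 4.6: for polar pricing vectors `Q`, the aggregate price of any feasible
    allocation `Y ∈ B` is dominated by its (deterministic) componentwise sum `c`. -/
theorem aggregate_price_dominated_by_sum
    {Ω : Type*} [MeasurableSpace Ω] (P : Measure Ω) [IsProbabilityMeasure P]
    (N : ℕ) (hN : 1 ≤ N)
    (B : Set (Fin N → Ω → ℝ))
    -- `B ⊆ C_ℝ` : the componentwise sum of every element of `B` is a.s. constant
    (hBCR : ∀ Y ∈ B, ∃ c : ℝ, ∀ᵐ ω ∂P, ∑ n, Y n ω = c)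
    -- `ℝ^N + B = B`
    (hBtrans : ∀ (b : Fin N → ℝ), ∀ Y ∈ B, (fun n ω => b n + Y n ω) ∈ B)
    (Q : Fin N → Measure Ω) [∀ n, IsProbabilityMeasure (Q n)]
    (hQP : ∀ n, Q n ≪ P)
    -- polarity: `Σₙ E_{Q^n}[Z^n] ≤ 0` for every `Z ∈ B` with `Σₙ Z^n = 0` a.s.
    (hpolar : ∀ Z ∈ B, (∀ᵐ ω ∂P, ∑ n, Z n ω = 0) →
      (∀ n, Integrable (Z n) (Q n)) → ∑ n, ∫ ω, Z n ω ∂(Q n) ≤ 0)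
    (Y : Fin N → Ω → ℝ) (hY : Y ∈ B)
    (hYint : ∀ n, Integrable (Y n) (Q n))
    (c : ℝ) (hc : ∀ᵐ ω ∂P, ∑ n, Y n ω = c) :
    ∑ n, ∫ ω, Y n ω ∂(Q n) ≤ c := by
  set n0 : Fin N := ⟨0, hN⟩
  set b : Fin N → ℝ := fun n => if n = n0 then -c else 0 with hb
  have hbsum : ∑ n, b n = -c := by simp [hb]
  set Z : Fin N → Ω → ℝ := fun n ω => b n + Y n ω with hZ
  have hZB : Z ∈ B := hBtrans b Y hY
  have hZsum : ∀ᵐ ω ∂P, ∑ n, Z n ω = 0 := by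
    filter_upwards [hc] with ω hω
    simp only [hZ, Finset.sum_add_distrib, hbsum, hω]
    ring
  have hZint : ∀ n, Integrable (Z n) (Q n) := fun n =>
    (integrable_const (b n)).add (hYint n)
  have h := hpolar Z hZB hZsum hZint
  have hint : ∀ n, ∫ ω, Z n ω ∂(Q n) = b n + ∫ ω, Y n ω ∂(Q n) := by
    intro n
    rw [integral_add (integrable_const (b n)) (hYint n)]
    simp
  simp only [hint, Finset.sum_add_distrib, hbsum] at h
  linarith
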